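/- Let (X,d,m) be a metric measure space with m finite, x,y ∈ X, and suppose there exist c > 0 such that every topological separating set Ω from x to y satisfies m^+(Ω) ≥ c, where m^+ is the Minkowski content. Then for every Lipschitz function u: X → ℝ one has c·|u(x) − u(y)| ≤ ∫_X lip u dm. -/

import Mathlib

open MeasureTheory Metric Set Filter
open scoped ENNReal NNReal

noncomputable section

/-- A rectifiable curve from `x` to `y`, encoded via a `1`-Lipschitz
(arclength-type) parametrization on `[0, T]`. -/
structure RectCurve (X : Type*) [MetricSpace X] (x y : X) where
  T : ℝ
  T_nonneg : 0 ≤ T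
  toFun : ℝ → X
  lip : LipschitzOnWith 1 toFun (Set.Icc 0 T)
  source : toFun 0 = x
  target : toFun T = y

/-- Length spent by the curve inside `A` up to time `s`. -/
def RectCurve.lengthInUpTo {X : Type*} [MetricSpace X] {x y : X}
    (c : RectCurve X x y) (A : Set X) (s : ℝ) : ℝ≥0∞ :=
  volume {t : ℝ | t ∈ Set.Icc 0 (min s c.T) ∧ c.toFun t ∈ A}

/-- Total length spent by the curve inside `A`. -/
def RectCurve.lengthIn {X : Type*} [MetricSpace X] {x y : X}
    (c : RectCurve X x y) (A : Set X) : ℝ≥0∞ :=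
  c.lengthInUpTo A c.T

/-- Length of the curve. -/
def RectCurve.length {X : Type*} [MetricSpace X] {x y : X}
    (c : RectCurve X x y) : ℝ≥0∞ :=
  eVariationOn c.toFun (Set.Icc 0 c.T)

/-- The width of `A` with respect to `x, y`: infimum over rectifiable curves
from `x` to `y` of the length spent inside `A` (`∞` if there is no such curve). -/
def width {X : Type*} [MetricSpace X] (x y : X) (A : Set X) : ℝ≥0∞ :=
  ⨅ c : RectCurve X x y, c.lengthIn A

/-- The position function of the set `A` with respect to `x, y`. -/
def posFn {X : Type*} [MetricSpace X] (x y : X) (A : Set X) (z : X) : ℝ≥0∞ :=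
  ⨅ (c : RectCurve X x y) (s : ℝ) (_ : s ∈ Set.Icc 0 c.T) (_ : c.toFun s = z),
    c.lengthInUpTo A s

/-- Topological separating set from `x` to `y`. -/
def IsSepSet {X : Type*} [MetricSpace X] (x y : X) (Ω : Set X) : Prop :=
  IsClosed Ω ∧ ∃ r > 0, Metric.ball x r ⊆ interior Ω ∧ Metric.ball y r ⊆ Ωᶜ

/-- Path-separating set between `x` and `y`: every rectifiable curve from `x`
to `y` meets `A`. -/
def IsPathSep {X : Type*} [MetricSpace X] (x y : X) (A : Set X) : Prop :=
  ∀ c : RectCurve X x y, ∃ t ∈ Set.Icc 0 c.T, c.toFun t ∈ A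

/-- Minkowski content of `Ω` with respect to `μ`. -/
def mink {X : Type*} [MetricSpace X] [MeasurableSpace X] (μ : Measure X) (Ω : Set X) : ℝ≥0∞ :=
  Filter.liminf (fun r : ℝ => μ (Metric.cthickening r Ω \ Ω) / ENNReal.ofReal r)
    (nhdsWithin 0 (Set.Ioi 0))

/-- The Riesz density with poles at `x` and `y` (it vanishes at the poles). -/
def rieszDensity {X : Type*} [MetricSpace X] [MeasurableSpace X] (m : Measure X) (x y : X) (z : X) : ℝ≥0∞ :=
  ENNReal.ofReal (dist x z) / m (Metric.ball x (dist x z))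
    + ENNReal.ofReal (dist y z) / m (Metric.ball y (dist y z))

/-- The `L`-truncated Riesz measure `m_{x,y}^L`. -/
def rieszMeasure {X : Type*} [MetricSpace X] [MeasurableSpace X] (m : Measure X) (x y : X) (L : ℝ) :
    Measure X :=
  m.withDensity
    ((Metric.ball x (2 * L * dist x y) ∪ Metric.ball y (2 * L * dist x y)).indicator
      (rieszDensity m x y))

/-- The local Lipschitz constant `lip u (z)` (with value `0` at isolated points,
since the limsup along the empty filter is `⊥`). -/
def lipConst {X : Type*} [MetricSpace X] (u : X → ℝ) (z : X) : ℝ≥0∞ :=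
  Filter.limsup (fun w => ENNReal.ofReal (|u w - u z| / dist w z))
    (nhdsWithin z {z}ᶜ)

/-- `m` is `C`-doubling. -/
def IsDoubling {X : Type*} [MetricSpace X] [MeasurableSpace X] (m : Measure X) (C : ℝ≥0) : Prop :=
  ∀ (z : X) (r : ℝ), 0 < r → m (Metric.ball z (2 * r)) ≤ C * m (Metric.ball z r)

/-- The separating ratio `m(A)/width_{x,y}(A)`, with the conventions that it is
`∞` when the width vanishes and `0` when the width is infinite. -/
def sepRatio {X : Type*} [MetricSpace X] [MeasurableSpace X] (m : Measure X) (x y : X) (A : Set X) : ℝ≥0∞ :=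
  if width x y A = 0 then ⊤ else m A / width x y A

/-- The support of the measure `m`. -/
def msupport {X : Type*} [MetricSpace X] [MeasurableSpace X] (m : Measure X) : Set X :=
  {z | ∀ r > 0, 0 < m (Metric.ball z r)}

/-- Line integral of a nonnegative density along a rectifiable curve
(in its `1`-Lipschitz parametrization). -/
def lineIntegral {X : Type*} [MetricSpace X] {x y : X}
    (c : RectCurve X x y) (ρ : X → ℝ≥0∞) : ℝ≥0∞ :=
  ∫⁻ t in Set.Icc (0 : ℝ) c.T, ρ (c.toFun t)

/-- Admissible densities for a family of curves. -/
def Adm {X : Type*} [MetricSpace X] [MeasurableSpace X] {x y : X} (Γ : Set (RectCurve X x y)) :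
    Set (X → ℝ≥0∞) :=
  {ρ | Measurable ρ ∧ ∀ c ∈ Γ, 1 ≤ lineIntegral c ρ}

/-- The `p`-modulus of a family of curves with respect to the measure `ν`. -/
def Modulus {X : Type*} [MetricSpace X] [MeasurableSpace X] {x y : X} (p : ℝ)
    (Γ : Set (RectCurve X x y)) (ν : Measure X) : ℝ≥0∞ :=
  ⨅ ρ ∈ Adm Γ, ∫⁻ z, ρ z ^ p ∂ν

end

noncomputable def Lfn {X : Type*} [MetricSpace X] (u : X → ℝ) (r' : ℝ) (z : X) : ℝ≥0∞ :=
  ⨆ w ∈ Metric.ball z r' \ {z}, ENNReal.ofReal (|u w - u z| / dist w z)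

lemma Lfn_le {X : Type*} [MetricSpace X] {u : X → ℝ} {K : ℝ≥0} (hu : LipschitzWith K u)
    (r' : ℝ) (z : X) : Lfn u r' z ≤ (K : ℝ≥0∞) := by
  refine iSup₂_le fun w hw => ?_
  have hwz : w ≠ z := fun h => hw.2 (by simp [h])
  have hd : 0 < dist w z := dist_pos.mpr hwz
  have h1 : |u w - u z| ≤ (K : ℝ) * dist w z := by
    have := hu.dist_le_mul w z
    rwa [Real.dist_eq] at this
  have : |u w - u z| / dist w z ≤ (K : ℝ) := by
    rw [div_le_iff₀ hd]; exact h1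
  calc ENNReal.ofReal (|u w - u z| / dist w z) ≤ ENNReal.ofReal (K : ℝ) :=
        ENNReal.ofReal_le_ofReal this
    _ = (K : ℝ≥0∞) := ENNReal.ofReal_coe_nnreal

lemma incl_key {X : Type*} [MetricSpace X] {u : X → ℝ} {K : ℝ≥0} (hu : LipschitzWith K u)
    {r r' : ℝ} (hr : 0 ≤ r) (hrr' : r < r') (t : ℝ) :
    Metric.cthickening r {z | t ≤ u z} \ {z | t ≤ u z} ⊆
      {z | u z < t ∧ t ≤ u z + (Lfn u r' z).toReal * r} := by
  intro z hz
  obtain ⟨hz1, hz2⟩ := hz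
  have huz : u z < t := not_le.mp hz2
  set ℓ : ℝ := (Lfn u r' z).toReal with hℓdef
  have hℓtop : Lfn u r' z ≠ ⊤ := ne_top_of_le_ne_top ENNReal.coe_ne_top (Lfn_le hu r' z)
  have hℓ0 : 0 ≤ ℓ := ENNReal.toReal_nonneg
  have key : ∀ δ : ℝ, 0 < δ → r + δ ≤ r' → t - u z ≤ ℓ * (r + δ) := by
    intro δ hδ hδ'
    have h1 : EMetric.infEdist z {z | t ≤ u z} < ENNReal.ofReal (r + δ) := by
      refine lt_of_le_of_lt hz1 ?_
      rw [ENNReal.ofReal_lt_ofReal_iff (by linarith)]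
      linarith
    obtain ⟨w, hw, hew⟩ := EMetric.infEdist_lt_iff.mp h1
    have hdw : dist z w < r + δ := by
      rwa [edist_lt_ofReal] at hew
    have htw : t ≤ u w := hw
    have hwz : w ≠ z := by
      intro h; rw [h] at htw; linarith
    have hd : 0 < dist w z := dist_pos.mpr hwz
    have hwb : w ∈ Metric.ball z r' \ {z} := by
      constructor
      · rw [Metric.mem_ball, dist_comm]; linarith
      · simp [hwz]
    have hle : ENNReal.ofReal (|u w - u z| / dist w z) ≤ Lfn u r' z :=
      le_iSup₂ (f := fun w _ => ENNReal.ofReal (|u w - u z| / dist w z)) w hwb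
    have hratio : |u w - u z| / dist w z ≤ ℓ := by
      have := ENNReal.toReal_mono hℓtop hle
      rwa [ENNReal.toReal_ofReal (by positivity)] at this
    have h2 : t - u z ≤ |u w - u z| := by
      have : t - u z ≤ u w - u z := by linarith
      exact this.trans (le_abs_self _)
    have h3 : |u w - u z| = (|u w - u z| / dist w z) * dist w z :=
      (div_mul_cancel₀ _ (ne_of_gt hd)).symm
    calc t - u z ≤ (|u w - u z| / dist w z) * dist w z := by rw [← h3]; exact h2
      _ ≤ ℓ * (r + δ) := by
          apply mul_le_mul hratio _ (le_of_lt hd) hℓ0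
          rw [dist_comm]; linarith
  have hfinal : t - u z ≤ ℓ * r := by
    by_contra hlt
    push_neg at hlt
    set ε : ℝ := t - u z - ℓ * r with hεdef
    have hε : 0 < ε := by simp only [hεdef]; linarith
    set δ : ℝ := min ((r' - r) / 2) (ε / (ℓ + 1)) with hδdef
    have hδpos : 0 < δ := lt_min (by linarith) (by positivity)
    have hδ1 : δ ≤ (r' - r) / 2 := min_le_left _ _
    have hδ2 : δ * (ℓ + 1) ≤ ε := by
      have : δ ≤ ε / (ℓ + 1) := min_le_right _ _
      rwa [le_div_iff₀ (by linarith)] at this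
    have := key δ hδpos (by linarith)
    nlinarith
  exact ⟨huz, by linarith⟩

lemma layer_fubini {X : Type*} [MetricSpace X] [MeasurableSpace X] [BorelSpace X]
    (m : Measure X) [IsFiniteMeasure m] {u : X → ℝ} (hu : Measurable u)
    {g : X → ℝ} (hg : Measurable g) :
    ∫⁻ t, m {z | u z < t ∧ t ≤ u z + g z} = ∫⁻ z, ENNReal.ofReal (g z) ∂m := by
  set A : Set (ℝ × X) := {p | u p.2 < p.1 ∧ p.1 ≤ u p.2 + g p.2} with hA
  have hAm : MeasurableSet A := by
    apply MeasurableSet.inter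
    · exact measurableSet_lt (hu.comp measurable_snd) measurable_fst
    · exact measurableSet_le measurable_fst ((hu.comp measurable_snd).add (hg.comp measurable_snd))
  set F : ℝ → X → ℝ≥0∞ := fun t z => A.indicator (fun _ => (1:ℝ≥0∞)) (t, z) with hF
  have h1 : ∀ t, m {z | u z < t ∧ t ≤ u z + g z} = ∫⁻ z, F t z ∂m := by
    intro t
    have hS : MeasurableSet {z | u z < t ∧ t ≤ u z + g z} := by
      apply MeasurableSet.inter
      · exact measurableSet_lt hu measurable_const
      · exact measurableSet_le measurable_const (hu.add hg)
    rw [← lintegral_indicator_one hS]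
    congr 1
  have h2 : ∀ z, ∫⁻ t, F t z = ENNReal.ofReal (g z) := by
    intro z
    have : (fun t => F t z) = (Set.Ioc (u z) (u z + g z)).indicator (fun _ => (1:ℝ≥0∞)) := by
      funext t
      simp only [hF, Set.indicator, hA, mem_setOf_eq, Set.mem_Ioc]
    rw [this]
    refine (lintegral_indicator_one measurableSet_Ioc).trans ?_
    rw [Real.volume_Ioc]
    congr 1
    ring
  have hswap : ∫⁻ t, ∫⁻ z, F t z ∂m = ∫⁻ z, (∫⁻ t, F t z) ∂m := by
    apply lintegral_lintegral_swap
    exact (measurable_const.indicator hAm).aemeasurable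
  calc ∫⁻ t, m {z | u z < t ∧ t ≤ u z + g z} = ∫⁻ t, ∫⁻ z, F t z ∂m := by
        congr 1; funext t; exact h1 t
    _ = ∫⁻ z, (∫⁻ t, F t z) ∂m := hswap
    _ = ∫⁻ z, ENNReal.ofReal (g z) ∂m := by congr 1; funext z; exact h2 z

lemma Lfn_lsc {X : Type*} [MetricSpace X] {u : X → ℝ} (hu : Continuous u) (r' : ℝ) :
    LowerSemicontinuous (Lfn u r') := by
  rw [lowerSemicontinuous_iff_isOpen_preimage]
  intro a
  rw [isOpen_iff_mem_nhds]
  intro z hz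
  simp only [mem_preimage, mem_Ioi] at hz
  obtain ⟨w, hw, hwa⟩ : ∃ w ∈ Metric.ball z r' \ {z},
      a < ENNReal.ofReal (|u w - u z| / dist w z) := by
    by_contra h
    push_neg at h
    exact absurd (iSup₂_le h) (not_le.mpr hz)
  have hwz : w ≠ z := fun h => hw.2 (by simp [h])
  have hd : (0:ℝ) < dist w z := dist_pos.mpr hwz
  -- the function z' ↦ ofReal (|u w - u z'| / dist w z') is continuous near z
  have hcont : ContinuousAt (fun z' => ENNReal.ofReal (|u w - u z'| / dist w z')) z := by
    apply ENNReal.continuous_ofReal.continuousAt.comp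
    exact ContinuousAt.div ((continuous_const.sub hu).abs.continuousAt)
      (continuous_const.dist continuous_id).continuousAt (ne_of_gt hd)
  have h1 : ∀ᶠ z' in nhds z, a < ENNReal.ofReal (|u w - u z'| / dist w z') :=
    hcont.eventually_const_lt hwa
  have h2 : ∀ᶠ z' in nhds z, dist w z' < r' := by
    have : Continuous fun z' => dist w z' := continuous_const.dist continuous_id
    exact this.continuousAt.eventually_lt continuousAt_const hw.1
  have h3 : ∀ᶠ z' in nhds z, w ≠ z' := by
    have : IsOpen {z' : X | w ≠ z'} := isOpen_ne_fun continuous_const continuous_id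
    exact this.mem_nhds hwz
  filter_upwards [h1, h2, h3] with z' ha hb hcn
  have hwmem : w ∈ Metric.ball z' r' \ {z'} := by
    constructor
    · rw [Metric.mem_ball]; exact hb
    · simp [hcn]
  calc a < ENNReal.ofReal (|u w - u z'| / dist w z') := ha
    _ ≤ Lfn u r' z' := le_iSup₂ (f := fun w _ => ENNReal.ofReal (|u w - u z'| / dist w z')) w hwmem

lemma Lfn_measurable {X : Type*} [MetricSpace X] [MeasurableSpace X] [BorelSpace X]
    {u : X → ℝ} (hu : Continuous u) (r' : ℝ) : Measurable (Lfn u r') :=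
  (Lfn_lsc hu r').measurable

lemma Hmeas {X : Type*} [MetricSpace X] [MeasurableSpace X] [BorelSpace X]
    (m : Measure X) [IsFiniteMeasure m] {u : X → ℝ} (hu : Continuous u) (r : ℝ) :
    Measurable (fun t : ℝ =>
      m (Metric.cthickening r {z | t ≤ u z} \ {z | t ≤ u z})) := by
  have hcl : ∀ t : ℝ, IsClosed {z | t ≤ u z} := fun t => isClosed_le continuous_const hu
  have heq : ∀ t : ℝ, m (Metric.cthickening r {z | t ≤ u z} \ {z | t ≤ u z})
      = m (Metric.cthickening r {z | t ≤ u z}) - m {z | t ≤ u z} := fun t =>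
    measure_diff (self_subset_cthickening _) (hcl t).measurableSet.nullMeasurableSet
      (measure_ne_top m _)
  simp only [heq]
  have hmono : ∀ t₁ t₂ : ℝ, t₁ ≤ t₂ → {z | t₂ ≤ u z} ⊆ {z | t₁ ≤ u z} :=
    fun t₁ t₂ h z hz => le_trans h hz
  have h1 : Antitone (fun t : ℝ => m (Metric.cthickening r {z | t ≤ u z})) :=
    fun t₁ t₂ h => measure_mono (cthickening_subset_of_subset r (hmono t₁ t₂ h))
  have h2 : Antitone (fun t : ℝ => m {z | t ≤ u z}) :=
    fun t₁ t₂ h => measure_mono (hmono t₁ t₂ h)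
  exact h1.measurable.sub h2.measurable

lemma liminf_along_seq {φ : ℝ → ℝ≥0∞} {rs : ℕ → ℝ}
    (h : Tendsto rs atTop (nhdsWithin 0 (Set.Ioi 0))) :
    liminf φ (nhdsWithin 0 (Set.Ioi 0)) ≤ liminf (fun k => φ (rs k)) atTop := by
  have h1 : liminf φ (nhdsWithin 0 (Set.Ioi 0)) ≤ liminf φ (Filter.map rs atTop) :=
    liminf_le_liminf_of_le h
  have h2 : liminf φ (Filter.map rs atTop) = liminf (fun k => φ (rs k)) atTop := by
    rw [Filter.liminf, Filter.liminf, Filter.map_map]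
    rfl
  rw [h2] at h1
  exact h1


section AuxProofs

variable {X : Type*} [MetricSpace X] [MeasurableSpace X] [BorelSpace X]

lemma aux_main (m : MeasureTheory.Measure X) [MeasureTheory.IsFiniteMeasure m]
    (x y : X) (c : ℝ) (hc : 0 < c)
    (hmin : ∀ Ω : Set X, IsSepSet x y Ω → ENNReal.ofReal c ≤ mink m Ω)
    (u : X → ℝ) {K : ℝ≥0} (hu : LipschitzWith K u) (hxy : u y ≤ u x) :
    ENNReal.ofReal c * ENNReal.ofReal (u x - u y) ≤ ∫⁻ z, lipConst u z ∂m := by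
  rcases eq_or_lt_of_le hxy with heq | hlt
  · rw [← heq, sub_self, ENNReal.ofReal_zero, mul_zero]
    exact zero_le
  have hcont : Continuous u := hu.continuous
  have humeas : Measurable u := hcont.measurable
  -- Step 0 : superlevel sets are separating sets
  have hsep : ∀ t ∈ Set.Ioo (u y) (u x), IsSepSet x y {z | t ≤ u z} := by
    intro t ht
    refine ⟨isClosed_le continuous_const hcont, ?_⟩
    set r0 : ℝ := min ((u x - t) / (K + 1)) ((t - u y) / (K + 1)) with hr0
    have hK1 : (0:ℝ) < (K:ℝ) + 1 := by positivity
    have h1 : (0:ℝ) < (u x - t) / (K + 1) := by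
      apply div_pos _ hK1; linarith [ht.2]
    have h2 : (0:ℝ) < (t - u y) / (K + 1) := by
      apply div_pos _ hK1; linarith [ht.1]
    refine ⟨r0, lt_min h1 h2, ?_, ?_⟩
    · -- ball x r0 ⊆ interior
      have hopen : IsOpen {z | t < u z} := isOpen_lt continuous_const hcont
      have hsub : {z : X | t < u z} ⊆ {z | t ≤ u z} := fun z hz => show t ≤ u z from le_of_lt hz
      refine subset_trans ?_ (hopen.subset_interior_iff.mpr hsub)
      intro w hw
      have hd : dist w x < r0 := Metric.mem_ball.mp hw
      have hK : |u w - u x| ≤ (K:ℝ) * dist w x := by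
        have := hu.dist_le_mul w x; rwa [Real.dist_eq] at this
      have hKd : (K:ℝ) * dist w x < u x - t := by
        calc (K:ℝ) * dist w x ≤ (K:ℝ) * r0 := by
              apply mul_le_mul_of_nonneg_left (le_of_lt hd) (K.coe_nonneg)
          _ ≤ (K:ℝ) * ((u x - t) / (K + 1)) := by
              apply mul_le_mul_of_nonneg_left (min_le_left _ _) (K.coe_nonneg)
          _ < u x - t := by
              rw [mul_div_assoc']
              rw [div_lt_iff₀ hK1]
              have : (0:ℝ) < u x - t := by linarith [ht.2]
              nlinarith [K.coe_nonneg]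
      have : u x - u w ≤ |u w - u x| := by
        rw [abs_sub_comm]; exact le_abs_self _
      show t < u w
      linarith
    · -- ball y r0 ⊆ complement
      intro w hw
      have hd : dist w y < r0 := Metric.mem_ball.mp hw
      have hK : |u w - u y| ≤ (K:ℝ) * dist w y := by
        have := hu.dist_le_mul w y; rwa [Real.dist_eq] at this
      have hKd : (K:ℝ) * dist w y < t - u y := by
        calc (K:ℝ) * dist w y ≤ (K:ℝ) * r0 := by
              apply mul_le_mul_of_nonneg_left (le_of_lt hd) (K.coe_nonneg)
          _ ≤ (K:ℝ) * ((t - u y) / (K + 1)) := by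
              apply mul_le_mul_of_nonneg_left (min_le_right _ _) (K.coe_nonneg)
          _ < t - u y := by
              rw [mul_div_assoc']
              rw [div_lt_iff₀ hK1]
              have : (0:ℝ) < t - u y := by linarith [ht.1]
              nlinarith [K.coe_nonneg]
      have : u w - u y ≤ |u w - u y| := le_abs_self _
      simp only [Set.mem_compl_iff, Set.mem_setOf_eq, not_le]
      linarith
  -- Step 1 : for every r' > 0, c * |Ioo| ≤ ∫ Lfn u r'
  have S1 : ∀ r' : ℝ, 0 < r' →
      ENNReal.ofReal c * volume (Set.Ioo (u y) (u x)) ≤ ∫⁻ z, Lfn u r' z ∂m := by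
    intro r' hr'
    set B := ∫⁻ z, Lfn u r' z ∂m with hB
    set rs : ℕ → ℝ := fun k => r' / ((k : ℝ) + 2) with hrs
    have hrs_pos : ∀ k, 0 < rs k := fun k => by positivity
    have hrs_lt : ∀ k, rs k < r' := by
      intro k
      rw [hrs]
      have h2 : (1:ℝ) < (k:ℝ) + 2 := by
        have := Nat.cast_nonneg (α := ℝ) k; linarith
      exact div_lt_self hr' h2
    have htend : Tendsto rs atTop (nhdsWithin 0 (Set.Ioi 0)) := by
      apply tendsto_nhdsWithin_of_tendsto_nhds_of_eventually_within
      · have h0 : Tendsto (fun k : ℕ => ((k : ℝ) + 2)) atTop atTop :=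
          tendsto_atTop_add_const_right atTop 2 tendsto_natCast_atTop_atTop
        simpa [hrs] using Tendsto.div_atTop (tendsto_const_nhds (x := r')) h0
      · exact Filter.Eventually.of_forall fun k => hrs_pos k
    set G : ℕ → ℝ → ℝ≥0∞ := fun k t =>
      m (Metric.cthickening (rs k) {z | t ≤ u z} \ {z | t ≤ u z}) / ENNReal.ofReal (rs k)
      with hG
    have hGmeas : ∀ k, Measurable (G k) := fun k =>
      (Hmeas m hcont (rs k)).div measurable_const
    have hpt : ∀ t ∈ Set.Ioo (u y) (u x),
        ENNReal.ofReal c ≤ liminf (fun k => G k t) atTop := by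
      intro t ht
      refine (hmin _ (hsep t ht)).trans ?_
      exact liminf_along_seq htend
    have hstep1 : ENNReal.ofReal c * volume (Set.Ioo (u y) (u x)) ≤
        ∫⁻ t in Set.Ioo (u y) (u x), liminf (fun k => G k t) atTop := by
      rw [← MeasureTheory.setLIntegral_const (Set.Ioo (u y) (u x)) (ENNReal.ofReal c)]
      exact MeasureTheory.setLIntegral_mono
        (Measurable.liminf fun k => hGmeas k) hpt
    have hstep2 : (∫⁻ t in Set.Ioo (u y) (u x), liminf (fun k => G k t) atTop) ≤
        liminf (fun k => ∫⁻ t in Set.Ioo (u y) (u x), G k t) atTop :=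
      MeasureTheory.lintegral_liminf_le fun k => hGmeas k
    have hbound : ∀ k, (∫⁻ t in Set.Ioo (u y) (u x), G k t) ≤ B := by
      intro k
      have hLmeas : Measurable (Lfn u r') := Lfn_measurable hcont r'
      set g : X → ℝ := fun z => (Lfn u r' z).toReal * rs k with hg
      have hgmeas : Measurable g := hLmeas.ennreal_toReal.mul_const _
      have hIH : (∫⁻ t, m (Metric.cthickening (rs k) {z | t ≤ u z} \ {z | t ≤ u z}))
          ≤ B * ENNReal.ofReal (rs k) := by
        have hmono : (∫⁻ t, m (Metric.cthickening (rs k) {z | t ≤ u z} \ {z | t ≤ u z}))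
            ≤ ∫⁻ t, m {z | u z < t ∧ t ≤ u z + g z} := by
          apply MeasureTheory.lintegral_mono
          intro t
          exact measure_mono (incl_key hu (le_of_lt (hrs_pos k)) (hrs_lt k) t)
        refine hmono.trans ?_
        rw [layer_fubini m humeas hgmeas]
        have hpt2 : ∀ z, ENNReal.ofReal (g z) = Lfn u r' z * ENNReal.ofReal (rs k) := by
          intro z
          rw [hg]
          rw [ENNReal.ofReal_mul ENNReal.toReal_nonneg]
          congr 1
          exact ENNReal.ofReal_toReal
            (ne_top_of_le_ne_top ENNReal.coe_ne_top (Lfn_le hu r' z))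
        calc (∫⁻ z, ENNReal.ofReal (g z) ∂m)
            = ∫⁻ z, Lfn u r' z * ENNReal.ofReal (rs k) ∂m := by
              apply MeasureTheory.lintegral_congr hpt2
          _ = B * ENNReal.ofReal (rs k) :=
              MeasureTheory.lintegral_mul_const' _ _ ENNReal.ofReal_ne_top
          _ ≤ B * ENNReal.ofReal (rs k) := le_rfl
      calc (∫⁻ t in Set.Ioo (u y) (u x), G k t) ≤ ∫⁻ t, G k t :=
            MeasureTheory.setLIntegral_le_lintegral _ _
        _ = (∫⁻ t, m (Metric.cthickening (rs k) {z | t ≤ u z} \ {z | t ≤ u z}))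
              / ENNReal.ofReal (rs k) := by
            simp only [hG, div_eq_mul_inv]
            exact MeasureTheory.lintegral_mul_const' _ _
              (ENNReal.inv_ne_top.mpr (ne_of_gt (ENNReal.ofReal_pos.mpr (hrs_pos k))))
        _ ≤ B := by
            rw [ENNReal.div_le_iff
              (ne_of_gt (ENNReal.ofReal_pos.mpr (hrs_pos k))) ENNReal.ofReal_ne_top]
            exact hIH
    have hlim : liminf (fun k => ∫⁻ t in Set.Ioo (u y) (u x), G k t) atTop ≤ B := by
      have := Filter.liminf_le_liminf (f := atTop) (Filter.Eventually.of_forall hbound)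
      rwa [Filter.liminf_const] at this
    exact hstep1.trans (hstep2.trans hlim)
  -- Step 2 : pass to the limit r' → 0
  set Ln : ℕ → X → ℝ≥0∞ := fun n => Lfn u (1 / ((n:ℝ) + 1)) with hLn
  have hLnmeas : ∀ n, Measurable (Ln n) := fun n => Lfn_measurable hcont _
  have hLnanti : Antitone Ln := by
    intro n n' hnn' z
    apply iSup₂_le
    intro w hw
    have hball : w ∈ Metric.ball z (1 / ((n:ℝ) + 1)) \ {z} := by
      refine ⟨?_, hw.2⟩
      have h1 : (1:ℝ) / ((n':ℝ) + 1) ≤ 1 / ((n:ℝ) + 1) := by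
        apply one_div_le_one_div_of_le (by positivity)
        have : (n:ℝ) ≤ (n':ℝ) := Nat.cast_le.mpr hnn'
        linarith
      exact Metric.ball_subset_ball h1 hw.1
    exact le_iSup₂ (f := fun w (_ : w ∈ Metric.ball z (1 / ((n:ℝ) + 1)) \ {z}) =>
      ENNReal.ofReal (|u w - u z| / dist w z)) w hball
  have hLn0fin : (∫⁻ z, Ln 0 z ∂m) ≠ ⊤ := by
    apply ne_top_of_le_ne_top (b := (K : ℝ≥0∞) * m Set.univ)
    · exact ENNReal.mul_ne_top ENNReal.coe_ne_top (measure_ne_top m _)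
    · calc (∫⁻ z, Ln 0 z ∂m) ≤ ∫⁻ _, (K : ℝ≥0∞) ∂m :=
            MeasureTheory.lintegral_mono fun z => Lfn_le hu _ z
        _ = (K : ℝ≥0∞) * m Set.univ := MeasureTheory.lintegral_const _
  have hiInf : (∫⁻ z, ⨅ n, Ln n z ∂m) = ⨅ n, ∫⁻ z, Ln n z ∂m :=
    MeasureTheory.lintegral_iInf hLnmeas hLnanti hLn0fin
  have hptwise : ∀ z, (⨅ n, Ln n z) ≤ lipConst u z := by
    intro z
    rw [lipConst, Filter.limsup_eq_iInf_iSup]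
    refine le_iInf₂ fun s hs => ?_
    obtain ⟨ε, hε, hsub⟩ := Metric.mem_nhdsWithin_iff.mp hs
    obtain ⟨n, hn⟩ := exists_nat_one_div_lt hε
    refine iInf_le_of_le n ?_
    refine iSup₂_le fun w hw => ?_
    have hws : w ∈ s := by
      apply hsub
      refine ⟨?_, hw.2⟩
      exact Metric.ball_subset_ball (le_of_lt hn) hw.1
    exact le_iSup₂ (f := fun a (_ : a ∈ s) => ENNReal.ofReal (|u a - u z| / dist a z)) w hws
  have hfinal : ENNReal.ofReal c * volume (Set.Ioo (u y) (u x)) ≤ ∫⁻ z, lipConst u z ∂m := by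
    calc ENNReal.ofReal c * volume (Set.Ioo (u y) (u x))
        ≤ ⨅ n, ∫⁻ z, Ln n z ∂m := le_iInf fun n => S1 _ (by positivity)
      _ = ∫⁻ z, ⨅ n, Ln n z ∂m := hiInf.symm
      _ ≤ ∫⁻ z, lipConst u z ∂m := MeasureTheory.lintegral_mono fun z => hptwise z
  rwa [Real.volume_Ioo] at hfinal

end AuxProofs



theorem stmt5 {X : Type*} [MetricSpace X] [MeasurableSpace X] [BorelSpace X] (m : MeasureTheory.Measure X)
    [MeasureTheory.IsFiniteMeasure m] (x y : X) (c : ℝ) (hc : 0 < c)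
    (hmin : ∀ Ω : Set X, IsSepSet x y Ω → ENNReal.ofReal c ≤ mink m Ω)
    (u : X → ℝ) (hu : ∃ K : ℝ≥0, LipschitzWith K u) :
    ENNReal.ofReal (c * |u x - u y|) ≤ ∫⁻ z, lipConst u z ∂m := by
  obtain ⟨K, hK⟩ := hu
  rcases le_total (u y) (u x) with h | h
  · have hmain := aux_main m x y c hc hmin u hK h
    rwa [abs_of_nonneg (sub_nonneg.mpr h), ENNReal.ofReal_mul hc.le]
  · set v : X → ℝ := fun z => -u z with hv
    have hKv : LipschitzWith K v := by
      have := hK.neg (E := ℝ)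
      exact this
    have h' : v y ≤ v x := neg_le_neg h
    have hmain := aux_main m x y c hc hmin v hKv h'
    have hEq : ∀ z, lipConst v z = lipConst u z := by
      intro z
      rw [lipConst, lipConst]
      congr 1
      funext w
      have : |v w - v z| = |u w - u z| := by
        simp only [hv]
        rw [show -u w - -u z = -(u w - u z) by ring, abs_neg]
      rw [this]
    rw [MeasureTheory.lintegral_congr hEq] at hmain
    have habs : |u x - u y| = v x - v y := by
      rw [abs_of_nonpos (sub_nonpos.mpr h)]
      simp only [hv]
      ring
    rwa [habs, ENNReal.ofReal_mul hc.le]
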